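/- Let λ be a regular uncountable cardinal, S ⊆ {δ < λ⁺ : cf(δ) = λ} a set stationary in λ⁺, and for each δ ∈ S let C_δ be a club of δ of order type λ. Define h_δ : C_δ → δ by h_δ(α) = min(C_δ ∖ (α+1)). Then there is no function f : λ⁺ → λ⁺ such that for every δ ∈ S the set {α ∈ C_δ : f(α) ≠ h_δ(α)} is bounded below δ. -/

import Mathlib

/-- `C` is a club of `κ`: a set of ordinals `< κ`, unbounded in `κ`, and closed: for
every nonempty `B ⊆ C` bounded below `κ`, `sup B ∈ C`. -/
def IsClubIn (C : Set Ordinal.{0}) (κo : Ordinal.{0}) : Prop :=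
  (∀ α ∈ C, α < κo) ∧ (∀ α < κo, ∃ β ∈ C, α ≤ β) ∧
    ∀ B ⊆ C, B.Nonempty → sSup B < κo → sSup B ∈ C

/-- `C` is a club of the limit ordinal `δ`: a subset of `δ`, unbounded in `δ`,
closed below `δ`. -/
def IsClubBelow (C : Set Ordinal.{0}) (δ : Ordinal.{0}) : Prop :=
  (∀ α ∈ C, α < δ) ∧ (∀ α < δ, ∃ β ∈ C, α ≤ β) ∧
    ∀ B ⊆ C, B.Nonempty → sSup B < δ → sSup B ∈ C

/-- The order type of a set of ordinals. -/
noncomputable def otype (C : Set Ordinal.{0}) : Ordinal.{1} :=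
  Ordinal.type (Subrel ((· < ·) : Ordinal.{0} → Ordinal.{0} → Prop) (· ∈ C))

/-- Transfinite iteration of `f` starting at `α`, taking suprema at limits. -/
noncomputable def iterF (f : Ordinal.{0} → Ordinal.{0}) (α : Ordinal.{0}) (ξ : Ordinal.{0}) :
    Ordinal.{0} :=
  Ordinal.limitRecOn ξ α (fun _ ih => f ih)
    (fun ξ' _ ih => sSup (Set.range fun η : Set.Iio ξ' => ih η.1 η.2))

lemma iterF_zero (f : Ordinal.{0} → Ordinal.{0}) (α : Ordinal.{0}) : iterF f α 0 = α :=
  Ordinal.limitRecOn_zero _ _ _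

lemma iterF_succ (f : Ordinal.{0} → Ordinal.{0}) (α ξ : Ordinal.{0}) :
    iterF f α (Order.succ ξ) = f (iterF f α ξ) :=
  Ordinal.limitRecOn_succ _ _ _ _

lemma iterF_limit (f : Ordinal.{0} → Ordinal.{0}) (α : Ordinal.{0}) {ξ : Ordinal.{0}}
    (h : Order.IsSuccLimit ξ) :
    iterF f α ξ = sSup (Set.range fun η : Set.Iio ξ => iterF f α η.1) :=
  Ordinal.limitRecOn_limit _ _ _ _ h

lemma sup_lt_ord_aux {ξ : Ordinal.{0}} {g : Set.Iio ξ → Ordinal.{0}} {c : Ordinal.{0}}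
    (hcard : ξ.card < c.cof) (hg : ∀ i, g i < c) (h0 : 0 < c) :
    sSup (Set.range g) < c := by
  rcases isEmpty_or_nonempty (Set.Iio ξ) with h | h
  · rw [Set.range_eq_empty g, csSup_empty]
    exact h0
  · have hr : Set.range g =
        Set.range (fun i : Shrink.{0} (Set.Iio ξ) => g ((equivShrink (Set.Iio ξ)).symm i)) :=
      (Function.Surjective.range_comp (equivShrink (Set.Iio ξ)).symm.surjective g).symm
    rw [hr]
    refine Ordinal.iSup_lt_ord ?_ fun i => hg _
    have h1 : Cardinal.lift.{1} (Cardinal.mk (Shrink.{0} (Set.Iio ξ))) = Cardinal.lift.{1} ξ.card := by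
      rw [Cardinal.lift_mk_shrink' (Set.Iio ξ), Ordinal.mk_Iio_ordinal]
      simp
    rwa [Cardinal.lift_injective h1]

/-- If a set of ordinals has order type `lift lam.ord`, there is no strictly increasing
`lam.ord`-sequence inside it bounded by one of its members. -/
lemma no_long_bounded_seq {C : Set Ordinal.{0}} {lam : Cardinal.{0}} {c : Ordinal.{0}}
    (hc : c ∈ C) (ho : Ordinal.type (Subrel ((· < ·) : Ordinal.{0} → Ordinal.{0} → Prop) (· ∈ C))
      = Ordinal.lift.{1} lam.ord)
    (x : Ordinal.{0} → Ordinal.{0})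
    (hmem : ∀ ξ < lam.ord, x ξ ∈ C) (hlt : ∀ ξ < lam.ord, x ξ < c)
    (hmono : ∀ η ξ, η < ξ → ξ < lam.ord → x η < x ξ) : False := by
  classical
  let r := Subrel ((· < ·) : Ordinal.{0} → Ordinal.{0} → Prop) (· ∈ C)
  let φ : {o : Ordinal.{0} // o < lam.ord} →
      {b : {o : Ordinal.{0} // o ∈ C} // r b ⟨c, hc⟩} := fun ξ =>
    ⟨⟨x ξ.1, hmem ξ.1 ξ.2⟩, hlt ξ.1 ξ.2⟩
  have hφ : ∀ a b, Subrel ((· < ·) : Ordinal.{0} → Ordinal.{0} → Prop)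
      (· < lam.ord) a b →
      Subrel r (r · ⟨c, hc⟩) (φ a) (φ b) :=
    fun a b h => hmono a.1 b.1 h b.2
  have emb := RelEmbedding.ofMonotone φ hφ
  have h1 : Ordinal.lift.{1} lam.ord ≤ Ordinal.typein r ⟨c, hc⟩ := by
    rw [← Ordinal.typein_ordinal lam.ord, ← Ordinal.type_subrel, ← Ordinal.type_subrel]
    exact emb.ordinal_type_le
  have h2 : Ordinal.typein r ⟨c, hc⟩ < Ordinal.lift.{1} lam.ord := by
    rw [← ho]
    exact Ordinal.typein_lt_type r ⟨c, hc⟩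
  exact absurd h1 (not_le.mpr h2)

/-- Let `λ` be regular uncountable, `S ⊆ {δ < λ⁺ : cf δ = λ}` stationary in `λ⁺`, and for
`δ ∈ S` let `C_δ` be a club of `δ` of order type `λ`.  With `h_δ (α) = min (C_δ ∖ (α+1))`,
there is no `f : λ⁺ → λ⁺` such that for every `δ ∈ S` the set
`{α ∈ C_δ : f α ≠ h_δ α}` is bounded below `δ`. -/
theorem stmt15 (lam : Cardinal.{0}) (hreg : lam.IsRegular) (hunc : Cardinal.aleph0 < lam)
    (S : Set Ordinal.{0}) (hS : ∀ δ ∈ S, δ < (Order.succ lam).ord ∧ δ.cof = lam)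
    (hstat : ∀ Cl : Set Ordinal.{0}, IsClubIn Cl (Order.succ lam).ord → (S ∩ Cl).Nonempty)
    (C : Ordinal.{0} → Set Ordinal.{0})
    (hC : ∀ δ ∈ S, IsClubBelow (C δ) δ ∧ otype (C δ) = Ordinal.lift.{1} lam.ord) :
    ¬ ∃ f : Ordinal.{0} → Ordinal.{0},
        (∀ α < (Order.succ lam).ord, f α < (Order.succ lam).ord) ∧
        ∀ δ ∈ S, ∃ γ < δ, ∀ α ∈ C δ,
          f α ≠ sInf {β : Ordinal.{0} | β ∈ C δ ∧ α < β} → α ≤ γ := by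
  rintro ⟨f, hflt, hguess⟩
  set κo : Ordinal.{0} := (Order.succ lam).ord with hκo
  have hκreg : (Order.succ lam).IsRegular := Cardinal.isRegular_succ hreg.aleph0_le
  have hκcof : κo.cof = Order.succ lam := hκreg.cof_eq
  have hκlim : Order.IsSuccLimit κo := Cardinal.isSuccLimit_ord hκreg.aleph0_le
  have hlam_lt_succ : lam < Order.succ lam := Order.lt_succ lam
  have hlamord : Order.IsSuccLimit (Cardinal.ord lam) := Cardinal.isSuccLimit_ord hreg.aleph0_le
  have hκpos : (0 : Ordinal.{0}) < κo := hκlim.pos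
  -- the iteration stays below κo
  have hbd : ∀ ξ : Ordinal.{0}, ξ ≤ lam.ord → ∀ α < κo, iterF f α ξ < κo := by
    intro ξ
    induction ξ using Ordinal.limitRecOn with
    | zero => intro _ α hα; rw [iterF_zero]; exact hα
    | add_one ξ ih =>
      intro hξ α hα
      rw [Ordinal.add_one_eq_succ] at hξ ⊢
      rw [iterF_succ]
      exact hflt _ (ih ((Order.le_succ ξ).trans hξ) α hα)
    | limit ξ hlim ih =>
      intro hξ α hα
      rw [iterF_limit f α hlim]
      refine sup_lt_ord_aux ?_ ?_ hκpos
      · rw [hκcof]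
        exact lt_of_le_of_lt (by simpa using Ordinal.card_le_card hξ) hlam_lt_succ
      · exact fun η => ih η.1 η.2 ((le_of_lt η.2).trans hξ) α hα
  set F : Ordinal.{0} → Ordinal.{0} := fun α => iterF f α lam.ord with hFdef
  have hFlt : ∀ α < κo, F α < κo := fun α hα => hbd _ le_rfl α hα
  -- the club of closure points of F
  set E : Set Ordinal.{0} := {β | β < κo ∧ ∀ ξ < β, F ξ < β} with hE
  have hEclub : IsClubIn E κo := by
    refine ⟨fun β hβ => hβ.1, ?_, ?_⟩
    · -- unbounded
      intro a ha
      have hN : ∀ x, 0 < x → x < κo → ∃ y, y < κo ∧ ∀ ξ < x, F ξ < y := by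
        intro x hx0 hx
        have hs : sSup (Set.range fun ξ : Set.Iio x => F ξ.1) < κo := by
          refine sup_lt_ord_aux ?_ (fun ξ => hFlt ξ.1 (ξ.2.trans hx)) hκpos
          rw [hκcof]
          exact lt_of_le_of_lt (Order.lt_succ_iff.mp (Cardinal.lt_ord.mp hx)) hlam_lt_succ
        refine ⟨sSup (Set.range fun ξ : Set.Iio x => F ξ.1) + 1, ?_, ?_⟩
        · rw [Ordinal.add_one_eq_succ]
          exact hκlim.succ_lt hs
        · intro ξ hξ
          have hb : BddAbove (Set.range fun ξ : Set.Iio x => F ξ.1) :=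
            Ordinal.bddAbove_of_small
          have : F ξ ≤ sSup (Set.range fun ξ : Set.Iio x => F ξ.1) :=
            le_csSup hb ⟨⟨ξ, hξ⟩, rfl⟩
          exact lt_of_le_of_lt this (lt_add_one _)
      set g : Ordinal.{0} → Ordinal.{0} := fun x =>
        if h : 0 < x ∧ x < κo then Classical.choose (hN x h.1 h.2) else 0 with hgdef
      set b : ℕ → Ordinal.{0} := fun n => Nat.rec (a + 1) (fun _ y => max (y + 1) (g y)) n
        with hbdef
      have hb0 : b 0 = a + 1 := rfl
      have hbsucc : ∀ n, b (n + 1) = max (b n + 1) (g (b n)) := fun n => rfl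
      have hbpos : ∀ n, 0 < b n ∧ b n < κo := by
        intro n
        induction n with
        | zero =>
          constructor
          · rw [hb0]; exact lt_of_le_of_lt (zero_le : 0 ≤ a) (lt_add_one a)
          · rw [hb0, Ordinal.add_one_eq_succ]; exact hκlim.succ_lt ha
        | succ n ih =>
          rw [hbsucc]
          constructor
          · exact lt_of_lt_of_le (lt_of_lt_of_le ih.1 (le_of_lt (lt_add_one _))) (le_max_left _ _)
          · refine max_lt ?_ ?_
            · rw [Ordinal.add_one_eq_succ]; exact hκlim.succ_lt ih.2
            · rw [hgdef]
              simp only [dif_pos (And.intro ih.1 ih.2)]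
              exact (Classical.choose_spec (hN (b n) ih.1 ih.2)).1
      have hbmono : ∀ n, b n < b (n + 1) := by
        intro n
        rw [hbsucc]
        exact lt_of_lt_of_le (lt_add_one _) (le_max_left _ _)
      have hbbdd : BddAbove (Set.range b) := Ordinal.bddAbove_range b
      refine ⟨sSup (Set.range b), ⟨?_, ?_⟩, ?_⟩
      · -- sSup (range b) < κo
        refine Ordinal.iSup_lt_ord ?_ fun n => (hbpos n).2
        rw [Cardinal.mk_nat, hκcof]
        exact lt_of_le_of_lt hreg.aleph0_le hlam_lt_succ
      · -- closure under F
        intro ξ hξ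
        obtain ⟨y, ⟨n, rfl⟩, hξy⟩ := (lt_csSup_iff hbbdd ⟨b 0, ⟨0, rfl⟩⟩).mp hξ
        have h1 : F ξ < g (b n) := by
          rw [hgdef]
          simp only [dif_pos (And.intro (hbpos n).1 (hbpos n).2)]
          exact (Classical.choose_spec (hN (b n) (hbpos n).1 (hbpos n).2)).2 ξ hξy
        have h2 : g (b n) ≤ b (n + 1) := by rw [hbsucc]; exact le_max_right _ _
        exact lt_of_lt_of_le (lt_of_lt_of_le h1 h2) (le_csSup hbbdd ⟨n + 1, rfl⟩)
      · exact le_of_lt (lt_of_lt_of_le (lt_add_one a) (le_csSup hbbdd ⟨0, rfl⟩))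
    · -- closed
      intro B hBE hBne hBlt
      haveI : Small.{0} B := small_subset (show B ⊆ Set.Iio κo from fun y hy => (hBE hy).1)
      have hBbdd : BddAbove B := Ordinal.bddAbove_of_small
      refine ⟨hBlt, ?_⟩
      intro ξ hξ
      obtain ⟨y, hyB, hξy⟩ := (lt_csSup_iff hBbdd hBne).mp hξ
      exact lt_of_lt_of_le ((hBE hyB).2 ξ hξy) (le_csSup hBbdd hyB)
  -- pick δ ∈ S ∩ E
  obtain ⟨δ, hδS, hδE⟩ := hstat E hEclub
  obtain ⟨hδκ, hδcof⟩ := hS δ hδS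
  obtain ⟨hδclub, hδot⟩ := hC δ hδS
  obtain ⟨hCsub, hCunb, hCcl⟩ := hδclub
  obtain ⟨γ, hγδ, hg⟩ := hguess δ hδS
  have hδlim : Order.IsSuccLimit δ := Ordinal.aleph0_le_cof.mp (by rw [hδcof]; exact hreg.aleph0_le)
  obtain ⟨α₀, hα₀C, hγα₀⟩ : ∃ α₀ ∈ C δ, γ < α₀ := by
    obtain ⟨β, hβ, hβ'⟩ := hCunb (Order.succ γ) (hδlim.succ_lt hγδ)
    exact ⟨β, hβ, lt_of_lt_of_le (Order.lt_succ γ) hβ'⟩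
  -- invariant of the iteration from α₀
  have inv : ∀ ξ : Ordinal.{0}, ξ < lam.ord →
      iterF f α₀ ξ ∈ C δ ∧ α₀ ≤ iterF f α₀ ξ ∧
        ∀ η < ξ, iterF f α₀ η < iterF f α₀ ξ := by
    intro ξ
    induction ξ using Ordinal.limitRecOn with
    | zero =>
      intro _
      rw [iterF_zero]
      exact ⟨hα₀C, le_rfl, fun η h => absurd h (not_lt_of_ge (zero_le : 0 ≤ η))⟩
    | add_one ξ ih =>
      intro hξ
      rw [Ordinal.add_one_eq_succ] at hξ ⊢
      obtain ⟨hmem, hle, hmono⟩ := ih ((Order.lt_succ ξ).trans hξ)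
      have hxδ : iterF f α₀ ξ < δ := hCsub _ hmem
      have hTne : {β : Ordinal.{0} | β ∈ C δ ∧ iterF f α₀ ξ < β}.Nonempty := by
        obtain ⟨β, hβ, hβ'⟩ := hCunb (Order.succ (iterF f α₀ ξ)) (hδlim.succ_lt hxδ)
        exact ⟨β, hβ, lt_of_lt_of_le (Order.lt_succ _) hβ'⟩
      have hinf := csInf_mem hTne
      have hfx : f (iterF f α₀ ξ) =
          sInf {β : Ordinal.{0} | β ∈ C δ ∧ iterF f α₀ ξ < β} := by
        by_contra h
        exact absurd (hg _ hmem h) (not_le.mpr (lt_of_lt_of_le hγα₀ hle))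
      rw [iterF_succ, hfx]
      refine ⟨hinf.1, le_trans hle (le_of_lt hinf.2), ?_⟩
      intro η hη
      rcases (Order.lt_succ_iff.mp hη).lt_or_eq with h | h
      · exact lt_trans (hmono η h) hinf.2
      · rw [h]; exact hinf.2
    | limit ξ hlim ih =>
      intro hξ
      rw [iterF_limit f α₀ hlim]
      set B := Set.range fun η : Set.Iio ξ => iterF f α₀ η.1 with hB
      have hBsub : B ⊆ C δ := by
        rintro _ ⟨η, rfl⟩
        exact (ih η.1 η.2 (lt_trans η.2 hξ)).1
      have hBne : B.Nonempty := ⟨_, ⟨⟨0, hlim.pos⟩, rfl⟩⟩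
      have hBlt : sSup B < δ := by
        refine sup_lt_ord_aux ?_ ?_ (lt_of_le_of_lt (zero_le : 0 ≤ γ) hγδ)
        · rw [hδcof]; exact Cardinal.lt_ord.mp hξ
        · exact fun η => hCsub _ (ih η.1 η.2 (lt_trans η.2 hξ)).1
      haveI : Small.{0} B := small_subset (show B ⊆ Set.Iio δ from fun y hy => hCsub y (hBsub hy))
      have hBbdd : BddAbove B := Ordinal.bddAbove_of_small
      refine ⟨hCcl B hBsub hBne hBlt, ?_, ?_⟩
      · exact le_csSup hBbdd ⟨⟨0, hlim.pos⟩, iterF_zero f α₀⟩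
      · intro η hη
        have hsη : Order.succ η < ξ := hlim.succ_lt hη
        have h1 : iterF f α₀ η < iterF f α₀ (Order.succ η) :=
          (ih (Order.succ η) hsη (lt_trans hsη hξ)).2.2 η (Order.lt_succ η)
        exact lt_of_lt_of_le h1 (le_csSup hBbdd ⟨⟨Order.succ η, hsη⟩, rfl⟩)
  -- conclusion
  have hα₀δ : α₀ < δ := hCsub _ hα₀C
  have hFα₀ : F α₀ < δ := hδE.2 α₀ hα₀δ
  have hFform : F α₀ = sSup (Set.range fun η : Set.Iio lam.ord => iterF f α₀ η.1) :=
    iterF_limit f α₀ hlamord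
  haveI : Small.{0} (Set.range fun η : Set.Iio lam.ord => iterF f α₀ η.1) :=
    small_subset (show _ ⊆ Set.Iio δ by
      rintro _ ⟨η, rfl⟩
      exact hCsub _ (inv η.1 η.2).1)
  have hbdd : BddAbove (Set.range fun η : Set.Iio lam.ord => iterF f α₀ η.1) :=
    Ordinal.bddAbove_of_small
  obtain ⟨c, hcC, hsc⟩ := hCunb (F α₀) hFα₀
  have hlt_c : ∀ η < lam.ord, iterF f α₀ η < c := by
    intro η hη
    have h1 : iterF f α₀ η ≤ F α₀ := by
      rw [hFform]
      exact le_csSup hbdd ⟨⟨η, hη⟩, rfl⟩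
    rcases lt_or_eq_of_le (le_trans h1 hsc) with h | h
    · exact h
    · exfalso
      have h2 : iterF f α₀ (Order.succ η) ≤ F α₀ := by
        rw [hFform]
        exact le_csSup hbdd ⟨⟨Order.succ η, hlamord.succ_lt hη⟩, rfl⟩
      have h3 := (inv (Order.succ η) (hlamord.succ_lt hη)).2.2 η (Order.lt_succ η)
      exact absurd (lt_of_lt_of_le (lt_of_lt_of_le h3 h2) (h ▸ hsc)) (lt_irrefl _)
  exact no_long_bounded_seq hcC hδot (iterF f α₀) (fun η hη => (inv η hη).1) hlt_c
    (fun η ξ hηξ hξ => (inv ξ hξ).2.2 η hηξ)
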